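/- Suppose f : [0,1]² → ℝ is Lipschitz continuous with f(x,y) > 0 for all (x,y), and λ : [0,1] → ℝ is nonnegative and integrable. Suppose there exist partitions 0 = w_0 < w_1 < ⋯ < w_H = 1 and 0 = v_0 < v_1 < ⋯ < v_M = 1 of [0,1], an H×M stochastic matrix p, and a real ρ* with max_{m} Σ_{h=1}^H p_{h,m} λ_h / ((v_m − v_{m−1}) μ*_{h,m}) < ρ*, where λ_h = ∫_{w_{h−1}}^{w_h} λ(x) dx and μ*_{h,m} = min of f on [w_{h−1}, w_h] × [v_{m−1}, v_m]. Then there exists n ∈ ℕ and a 2ⁿ×2ⁿ stochastic matrix p' such that for every m̂ ∈ {1,…,2ⁿ}: Σ_{ĥ=1}^{2ⁿ} 2ⁿ λ^{(n)}_{ĥ} p'_{ĥ,m̂} / μ^{*(n)}_{ĥ,m̂} < ρ*; equivalently ρⁿ < ρ*. -/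

import Mathlib

open MeasureTheory Set Finset

/-- Integral of the arrival rate function over the `h`-th dyadic subinterval of
`[0,1]` at level `n`: `λ^{(n)}_h = ∫_{h/2ⁿ}^{(h+1)/2ⁿ} λ(x) dx`. -/
noncomputable def lamDyadic (lam : ℝ → ℝ) (n : ℕ) (h : Fin (2 ^ n)) : ℝ :=
  ∫ x in (((h : ℕ) : ℝ) / 2 ^ n)..((((h : ℕ) : ℝ) + 1) / 2 ^ n), lam x

/-- Minimum of `f` on the dyadic square, realized as the `sInf` of the image. -/
noncomputable def muStarDyadic (f : ℝ × ℝ → ℝ) (n : ℕ) (h m : Fin (2 ^ n)) : ℝ :=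
  sInf (f '' (Icc (((h : ℕ) : ℝ) / 2 ^ n) ((((h : ℕ) : ℝ) + 1) / 2 ^ n) ×ˢ
              Icc (((m : ℕ) : ℝ) / 2 ^ n) ((((m : ℕ) : ℝ) + 1) / 2 ^ n)))

/-- A matrix with entries in `[0,1]` and unit row sums. -/
def IsStochastic {H M : ℕ} (p : Fin H → Fin M → ℝ) : Prop :=
  (∀ h m, 0 ≤ p h m ∧ p h m ≤ 1) ∧ ∀ h, ∑ m, p h m = 1

/-- `ρⁿ`: infimum over `2ⁿ×2ⁿ` stochastic matrices of the worst-case load with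
minimal service rates. -/
noncomputable def rhoStar (f : ℝ × ℝ → ℝ) (lam : ℝ → ℝ) (n : ℕ) : ℝ :=
  sInf { r : ℝ | ∃ p : Fin (2 ^ n) → Fin (2 ^ n) → ℝ, IsStochastic p ∧
    r = ⨆ m : Fin (2 ^ n), ∑ h : Fin (2 ^ n),
      (2 ^ n : ℝ) * lamDyadic lam n h * p h m / muStarDyadic f n h m }

/-! ### Auxiliary material for the proof of `stmt13` -/

noncomputable def clampR (a b x : ℝ) : ℝ := max a (min b x)

lemma clampR_mono (a b : ℝ) : Monotone (clampR a b) := fun _ _ hxy =>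
  max_le_max le_rfl (min_le_min le_rfl hxy)

lemma clampR_mem {a b : ℝ} (hab : a ≤ b) (x : ℝ) : clampR a b x ∈ Icc a b :=
  ⟨le_max_left _ _, max_le hab (min_le_left _ _)⟩

lemma clampR_sub_le (a b : ℝ) {c d : ℝ} (hcd : c ≤ d) :
    clampR a b d - clampR a b c ≤ d - c := by
  unfold clampR
  rcases le_total b d with h1 | h1 <;> rcases le_total b c with h2 | h2 <;>
    simp only [max_def, min_def] <;> split_ifs <;> linarith

lemma clampR_of_ge {a b x : ℝ} (hab : a ≤ b) (hbx : b ≤ x) : clampR a b x = b := by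
  unfold clampR; rw [min_eq_left hbx, max_eq_right hab]

lemma clampR_of_le {a b x : ℝ} (hxa : x ≤ a) : clampR a b x = a := by
  unfold clampR
  rcases le_total b x with h | h
  · rw [min_eq_left h, max_eq_left (le_trans h hxa)]
  · rw [min_eq_right h, max_eq_left hxa]

/-- if the clamped increment is positive, the interval `[c,d]` meets `(a,b)`. -/
lemma clampR_pos_inter {a b c d : ℝ} (hcd : c ≤ d)
    (h : 0 < clampR a b d - clampR a b c) : c < b ∧ a < d := by
  constructor
  · by_contra hcb
    push_neg at hcb
    have h1 : clampR a b c = max a b := by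
      unfold clampR; rw [min_eq_left hcb]
    have h2 : clampR a b d ≤ max a b := max_le (le_max_left _ _)
      (le_trans (min_le_left _ _) (le_max_right _ _))
    rw [h1] at h; linarith
  · by_contra hda
    push_neg at hda
    rw [clampR_of_le hda, clampR_of_le (le_trans hcd hda)] at h
    linarith

lemma abs_sub_clampR {a b t δ : ℝ} (hab : a ≤ b) (hδ : 0 ≤ δ)
    (h1 : a - δ ≤ t) (h2 : t ≤ b + δ) : |t - clampR a b t| ≤ δ := by
  rcases le_total t a with h | h
  · rw [clampR_of_le h]; rw [abs_le]; constructor <;> linarith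
  · rcases le_total b t with h' | h'
    · rw [clampR_of_ge hab h']; rw [abs_le]; constructor <;> linarith
    · have : clampR a b t = t := by unfold clampR; rw [min_eq_right h', max_eq_right h]
      rw [this]; simpa using hδ

lemma seg_symm {a b c d : ℝ} (hab : a ≤ b) (hcd : c ≤ d) :
    clampR a b d - clampR a b c = clampR c d b - clampR c d a := by
  unfold clampR
  rcases le_total a c with h1|h1 <;> rcases le_total a d with h2|h2 <;>
    rcases le_total b c with h3|h3 <;> rcases le_total b d with h4|h4 <;>
    simp only [max_def, min_def] <;> split_ifs <;> linarith

/-- telescoping sum over a `Fin`-indexed partition. -/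
lemma sum_fin_sub {N : ℕ} (g : Fin (N + 1) → ℝ) :
    ∑ i : Fin N, (g i.succ - g i.castSucc) = g (Fin.last N) - g 0 := by
  induction N with
  | zero => simp
  | succ N ih =>
    rw [Fin.sum_univ_castSucc]
    have : ∀ i : Fin N, g i.castSucc.succ - g i.castSucc.castSucc
        = (g ∘ Fin.castSucc) i.succ - (g ∘ Fin.castSucc) i.castSucc := by
      intro i; rfl
    simp only [this]
    rw [ih (g ∘ Fin.castSucc)]
    have h2 : (Fin.last N).succ = Fin.last (N + 1) := Fin.succ_last N
    simp only [Function.comp_apply, h2]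
    have h0 : (Fin.castSucc (0 : Fin (N+1))) = (0 : Fin (N+2)) := rfl
    rw [h0]; ring

lemma sum_dyadic_tele (n : ℕ) (G : ℝ → ℝ) :
    ∑ j : Fin (2 ^ n), (G ((((j:ℕ):ℝ) + 1) / 2 ^ n) - G (((j:ℕ):ℝ) / 2 ^ n)) = G 1 - G 0 := by
  have key := sum_fin_sub (N := 2 ^ n) (fun i : Fin (2 ^ n + 1) => G (((i:ℕ):ℝ) / 2 ^ n))
  have h1 : ∑ j : Fin (2 ^ n), (G ((((j:ℕ):ℝ) + 1) / 2 ^ n) - G (((j:ℕ):ℝ) / 2 ^ n))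
      = ∑ j : Fin (2 ^ n), ((fun i : Fin (2 ^ n + 1) => G (((i:ℕ):ℝ) / 2 ^ n)) j.succ
          - (fun i : Fin (2 ^ n + 1) => G (((i:ℕ):ℝ) / 2 ^ n)) j.castSucc) := by
    apply Finset.sum_congr rfl
    intro j _
    simp only [Fin.val_succ, Fin.coe_castSucc]
    push_cast
    ring_nf
  rw [h1, key]
  congr 1
  · congr 1
    simp only [Fin.val_last]
    push_cast
    rw [div_self (by positivity)]
  · norm_num

section Dyadic
variable (n : ℕ)

lemma dyadicPt_nonneg (i : Fin (2 ^ n)) : 0 ≤ ((i : ℕ) : ℝ) / 2 ^ n :=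
  div_nonneg (Nat.cast_nonneg _) (by positivity)

lemma dyadicPt_succ (i : Fin (2 ^ n)) :
    (((i : ℕ) : ℝ) + 1) / 2 ^ n = ((i : ℕ) : ℝ) / 2 ^ n + ((2:ℝ) ^ n)⁻¹ := by
  field_simp

lemma dyadicPt_succ_le_one (i : Fin (2 ^ n)) : (((i : ℕ) : ℝ) + 1) / 2 ^ n ≤ 1 := by
  rw [div_le_one (by positivity)]
  have : ((i : ℕ) : ℝ) + 1 = (((i : ℕ) + 1 : ℕ) : ℝ) := by push_cast; ring
  rw [this]
  exact_mod_cast Nat.cast_le.mpr i.isLt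

lemma dyadicPt_le (i : Fin (2 ^ n)) : ((i : ℕ) : ℝ) / 2 ^ n ≤ (((i : ℕ) : ℝ) + 1) / 2 ^ n := by
  apply div_le_div_of_nonneg_right ?_ (by positivity)
  · linarith

end Dyadic

/-- the infimum of a continuous function over a nonempty rectangle is attained -/
lemma sqInf_attained {f : ℝ × ℝ → ℝ} {x1 x2 y1 y2 : ℝ} (hx : x1 ≤ x2) (hy : y1 ≤ y2)
    (hf : ContinuousOn f (Icc x1 x2 ×ˢ Icc y1 y2)) :
    ∃ z ∈ Icc x1 x2 ×ˢ Icc y1 y2, sInf (f '' (Icc x1 x2 ×ˢ Icc y1 y2)) = f z :=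
  (isCompact_Icc.prod isCompact_Icc).exists_sInf_image_eq
    ⟨(x1, y1), by simp [hx, hy]⟩ hf

lemma sqInf_le {f : ℝ × ℝ → ℝ} {x1 x2 y1 y2 : ℝ}
    (hf : ContinuousOn f (Icc x1 x2 ×ˢ Icc y1 y2)) {z : ℝ × ℝ}
    (hz : z ∈ Icc x1 x2 ×ˢ Icc y1 y2) :
    sInf (f '' (Icc x1 x2 ×ˢ Icc y1 y2)) ≤ f z :=
  csInf_le (((isCompact_Icc.prod isCompact_Icc).image_of_continuousOn hf).bddBelow)
    ⟨z, hz, rfl⟩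

/-- Lipschitz comparison of rectangle minima. -/
lemma sqInf_lower {f : ℝ × ℝ → ℝ} {K : NNReal}
    (hfLip : LipschitzOnWith K f (Icc (0:ℝ) 1 ×ˢ Icc (0:ℝ) 1))
    {x1 x2 y1 y2 : ℝ} (hx : x1 ≤ x2) (hy : y1 ≤ y2)
    (hsub : Icc x1 x2 ×ˢ Icc y1 y2 ⊆ Icc (0:ℝ) 1 ×ˢ Icc (0:ℝ) 1)
    {a b c d δ : ℝ} (hab : a ≤ b) (hcd : c ≤ d) (hδ : 0 ≤ δ)
    (hT : Icc a b ×ˢ Icc c d ⊆ Icc (0:ℝ) 1 ×ˢ Icc (0:ℝ) 1)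
    (ha : x1 - δ ≤ a) (hb : b ≤ x2 + δ) (hc : y1 - δ ≤ c) (hd : d ≤ y2 + δ) :
    sInf (f '' (Icc x1 x2 ×ˢ Icc y1 y2)) - K * δ ≤ sInf (f '' (Icc a b ×ˢ Icc c d)) := by
  obtain ⟨z, hz, hzeq⟩ := sqInf_attained hab hcd (hfLip.continuousOn.mono hT)
  set z' : ℝ × ℝ := (clampR x1 x2 z.1, clampR y1 y2 z.2) with hz'def
  have hz'mem : z' ∈ Icc x1 x2 ×ˢ Icc y1 y2 :=
    ⟨clampR_mem hx z.1, clampR_mem hy z.2⟩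
  have hdist : dist z z' ≤ δ := by
    rw [Prod.dist_eq]
    refine max_le ?_ ?_
    · rw [Real.dist_eq]
      exact abs_sub_clampR hx hδ (le_trans ha hz.1.1) (le_trans hz.1.2 hb)
    · rw [Real.dist_eq]
      exact abs_sub_clampR hy hδ (le_trans hc hz.2.1) (le_trans hz.2.2 hd)
  have hfd : dist (f z) (f z') ≤ K * dist z z' :=
    hfLip.dist_le_mul z (hT hz) z' (hsub hz'mem)
  have h1 : f z' - f z ≤ K * δ := by
    have h2 : (K:ℝ) * dist z z' ≤ K * δ :=
      mul_le_mul_of_nonneg_left hdist K.coe_nonneg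
    calc f z' - f z ≤ dist (f z) (f z') := by
          rw [dist_comm, Real.dist_eq]; exact le_abs_self _
    _ ≤ K * dist z z' := hfd
    _ ≤ K * δ := h2
  have h2 : sInf (f '' (Icc x1 x2 ×ˢ Icc y1 y2)) ≤ f z' :=
    sqInf_le (hfLip.continuousOn.mono hsub) hz'mem
  rw [hzeq]; linarith

lemma sqInf_pos {f : ℝ × ℝ → ℝ}
    (hf : ContinuousOn f (Icc (0:ℝ) 1 ×ˢ Icc (0:ℝ) 1))
    (hfpos : ∀ z ∈ Icc (0:ℝ) 1 ×ˢ Icc (0:ℝ) 1, 0 < f z)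
    {x1 x2 y1 y2 : ℝ} (hx : x1 ≤ x2) (hy : y1 ≤ y2)
    (hsub : Icc x1 x2 ×ˢ Icc y1 y2 ⊆ Icc (0:ℝ) 1 ×ˢ Icc (0:ℝ) 1) :
    0 < sInf (f '' (Icc x1 x2 ×ˢ Icc y1 y2)) := by
  obtain ⟨z, hz, hzeq⟩ := sqInf_attained hx hy (hf.mono hsub)
  rw [hzeq]; exact hfpos z (hsub hz)

/-- grouping bound: the weighted sum of dyadic integrals for weights clamped to
`[wc, ws]` is bounded by the integral over a slightly larger interval. -/
lemma lam_group_bound (lam : ℝ → ℝ) (hlam : ∀ x ∈ Icc (0:ℝ) 1, 0 ≤ lam x)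
    (hint : IntegrableOn lam (Icc 0 1)) (n : ℕ) {wc ws : ℝ}
    (h0 : 0 ≤ wc) (hcs : wc ≤ ws) (hs1 : ws ≤ 1) :
    ∑ i : Fin (2 ^ n), (2 ^ n : ℝ) *
        (clampR wc ws ((((i:ℕ):ℝ) + 1) / 2 ^ n) - clampR wc ws (((i:ℕ):ℝ) / 2 ^ n)) *
        (∫ x in (((i:ℕ):ℝ) / 2 ^ n)..((((i:ℕ):ℝ) + 1) / 2 ^ n), lam x)
      ≤ ∫ x in Ioc (max (wc - ((2:ℝ) ^ n)⁻¹) 0) (min (ws + ((2:ℝ) ^ n)⁻¹) 1), lam x := by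
  set δ : ℝ := ((2:ℝ) ^ n)⁻¹ with hδdef
  have hδpos : 0 < δ := by positivity
  set a' : ℝ := max (wc - δ) 0
  set b' : ℝ := min (ws + δ) 1
  set seg : Fin (2 ^ n) → ℝ := fun i =>
    clampR wc ws ((((i:ℕ):ℝ) + 1) / 2 ^ n) - clampR wc ws (((i:ℕ):ℝ) / 2 ^ n) with hsegdef
  set lamD : Fin (2 ^ n) → ℝ := fun i =>
    ∫ x in (((i:ℕ):ℝ) / 2 ^ n)..((((i:ℕ):ℝ) + 1) / 2 ^ n), lam x with hlamDdef
  have hseg_nonneg : ∀ i, 0 ≤ seg i := fun i =>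
    sub_nonneg.2 (clampR_mono wc ws (dyadicPt_le n i))
  have hseg_le : ∀ i, (2 ^ n : ℝ) * seg i ≤ 1 := by
    intro i
    have := clampR_sub_le wc ws (dyadicPt_le n i)
    have h2 : (((i:ℕ):ℝ) + 1) / 2 ^ n - ((i:ℕ):ℝ) / 2 ^ n = δ := by
      rw [dyadicPt_succ]; ring
    rw [h2] at this
    calc (2 ^ n : ℝ) * seg i ≤ (2 ^ n : ℝ) * δ := by
          apply mul_le_mul_of_nonneg_left this (by positivity)
    _ = 1 := by rw [hδdef]; field_simp
  have hlamD_nonneg : ∀ i, 0 ≤ lamD i := by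
    intro i
    apply intervalIntegral.integral_nonneg (dyadicPt_le n i)
    intro x hx
    exact hlam x ⟨le_trans (dyadicPt_nonneg n i) hx.1, le_trans hx.2 (dyadicPt_succ_le_one n i)⟩
  set S : Finset (Fin (2 ^ n)) := univ.filter (fun i => 0 < seg i) with hSdef
  have step1 : ∑ i : Fin (2 ^ n), (2 ^ n : ℝ) * seg i * lamD i ≤ ∑ i ∈ S, lamD i := by
    rw [← Finset.sum_filter_add_sum_filter_not univ (fun i => 0 < seg i)
      (fun i => (2 ^ n : ℝ) * seg i * lamD i)]
    have hz : ∑ i ∈ univ.filter (fun i => ¬ 0 < seg i), (2 ^ n : ℝ) * seg i * lamD i = 0 := by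
      apply Finset.sum_eq_zero
      intro i hi
      rw [Finset.mem_filter] at hi
      have : seg i = 0 := le_antisymm (not_lt.1 hi.2) (hseg_nonneg i)
      rw [this]; ring
    rw [hz, add_zero]
    apply Finset.sum_le_sum
    intro i _
    calc (2 ^ n : ℝ) * seg i * lamD i ≤ 1 * lamD i :=
          mul_le_mul_of_nonneg_right (hseg_le i) (hlamD_nonneg i)
    _ = lamD i := one_mul _
  have hdisj : (S : Set (Fin (2 ^ n))).Pairwise
      (Function.onFun Disjoint fun i : Fin (2 ^ n) => Ioc (((i:ℕ):ℝ) / 2 ^ n) ((((i:ℕ):ℝ) + 1) / 2 ^ n)) := by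
    intro i _ j _ hij
    have key : ∀ i j : Fin (2 ^ n), (i : ℕ) < (j : ℕ) →
        Disjoint (Ioc (((i:ℕ):ℝ) / 2 ^ n) ((((i:ℕ):ℝ) + 1) / 2 ^ n))
          (Ioc (((j:ℕ):ℝ) / 2 ^ n) ((((j:ℕ):ℝ) + 1) / 2 ^ n)) := by
      intro i j hij
      rw [Set.Ioc_disjoint_Ioc]
      refine le_trans (min_le_left _ _) (le_max_of_le_right ?_)
      apply div_le_div_of_nonneg_right ?_ (by positivity)
      exact_mod_cast Nat.succ_le_of_lt hij
    rcases lt_or_gt_of_ne (fun h => hij (Fin.ext h) : (i:ℕ) ≠ (j:ℕ)) with h | h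
    · exact key i j h
    · exact (key j i h).symm
  have hintOn : ∀ i : Fin (2 ^ n),
      IntegrableOn lam (Ioc (((i:ℕ):ℝ) / 2 ^ n) ((((i:ℕ):ℝ) + 1) / 2 ^ n)) := by
    intro i
    apply hint.mono_set
    intro x hx
    exact ⟨le_trans (dyadicPt_nonneg n i) hx.1.le, le_trans hx.2 (dyadicPt_succ_le_one n i)⟩
  have step2 : ∑ i ∈ S, lamD i =
      ∫ x in ⋃ i ∈ S, Ioc (((i:ℕ):ℝ) / 2 ^ n) ((((i:ℕ):ℝ) + 1) / 2 ^ n), lam x := by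
    rw [MeasureTheory.integral_biUnion_finset S (fun i _ => measurableSet_Ioc) hdisj
      (fun i _ => hintOn i)]
    apply Finset.sum_congr rfl
    intro i _
    rw [hlamDdef]
    exact intervalIntegral.integral_of_le (dyadicPt_le n i)
  have hsubU : (⋃ i ∈ S, Ioc (((i:ℕ):ℝ) / 2 ^ n) ((((i:ℕ):ℝ) + 1) / 2 ^ n)) ⊆ Ioc a' b' := by
    apply Set.iUnion₂_subset
    intro i hi
    rw [hSdef, Finset.mem_filter] at hi
    obtain ⟨hws, hwc⟩ := clampR_pos_inter (dyadicPt_le n i) hi.2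
    apply Set.Ioc_subset_Ioc
    · apply max_le
      · rw [dyadicPt_succ] at hwc; linarith
      · exact dyadicPt_nonneg n i
    · apply le_min
      · rw [dyadicPt_succ]; linarith
      · exact dyadicPt_succ_le_one n i
  have step3 : (∫ x in ⋃ i ∈ S, Ioc (((i:ℕ):ℝ) / 2 ^ n) ((((i:ℕ):ℝ) + 1) / 2 ^ n), lam x)
      ≤ ∫ x in Ioc a' b', lam x := by
    apply MeasureTheory.setIntegral_mono_set
    · apply hint.mono_set
      intro x hx
      exact ⟨le_trans (le_max_right _ 0) hx.1.le, le_trans hx.2 (min_le_right _ 1)⟩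
    · apply MeasureTheory.ae_restrict_of_forall_mem measurableSet_Ioc
      intro x hx
      exact hlam x ⟨le_trans (le_max_right _ 0) hx.1.le, le_trans hx.2 (min_le_right _ 1)⟩
    · exact HasSubset.Subset.eventuallyLE hsubU
  calc ∑ i : Fin (2 ^ n), (2 ^ n : ℝ) * seg i * lamD i ≤ ∑ i ∈ S, lamD i := step1
  _ = _ := step2
  _ ≤ _ := step3

/-- core construction: at a sufficiently fine dyadic level, the continuous
partition induces a good stochastic matrix. -/
lemma dyadic_construction
    (f : ℝ × ℝ → ℝ) (K : NNReal)
    (hfLip : LipschitzOnWith K f (Icc (0:ℝ) 1 ×ˢ Icc (0:ℝ) 1))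
    (hfpos : ∀ z ∈ Icc (0:ℝ) 1 ×ˢ Icc (0:ℝ) 1, 0 < f z)
    (lam : ℝ → ℝ) (hlam : ∀ x ∈ Icc (0:ℝ) 1, 0 ≤ lam x)
    (hint : IntegrableOn lam (Icc 0 1))
    {H M : ℕ}
    (w : Fin (H + 1) → ℝ) (hw0 : w 0 = 0) (hw1 : w (Fin.last H) = 1) (hwmono : StrictMono w)
    (v : Fin (M + 1) → ℝ) (hv0 : v 0 = 0) (hv1 : v (Fin.last M) = 1) (hvmono : StrictMono v)
    (p : Fin H → Fin M → ℝ) (hp : IsStochastic p)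
    (rstar : ℝ) (n : ℕ)
    (hsmall : ∀ (h : Fin H) (m : Fin M), (K:ℝ) * ((2:ℝ)^n)⁻¹ <
        sInf (f '' (Icc (w h.castSucc) (w h.succ) ×ˢ Icc (v m.castSucc) (v m.succ))))
    (hBnd : ∀ m : Fin M, ∑ h : Fin H, p h m *
        (∫ x in Ioc (max (w h.castSucc - ((2:ℝ)^n)⁻¹) 0) (min (w h.succ + ((2:ℝ)^n)⁻¹) 1), lam x) /
        ((v m.succ - v m.castSucc) *
          (sInf (f '' (Icc (w h.castSucc) (w h.succ) ×ˢ Icc (v m.castSucc) (v m.succ)))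
            - K * ((2:ℝ)^n)⁻¹))
        < rstar) :
    ∃ p' : Fin (2 ^ n) → Fin (2 ^ n) → ℝ, IsStochastic p' ∧
      ∀ m : Fin (2 ^ n), ∑ h : Fin (2 ^ n),
        (2 ^ n : ℝ) * lamDyadic lam n h * p' h m / muStarDyadic f n h m < rstar := by
  classical
  obtain ⟨hp01, hprow⟩ := hp
  have hfCont : ContinuousOn f (Icc (0:ℝ) 1 ×ˢ Icc (0:ℝ) 1) := hfLip.continuousOn
  have hwmem : ∀ i, w i ∈ Icc (0:ℝ) 1 := by
    intro i
    exact ⟨hw0 ▸ hwmono.monotone (Fin.zero_le i), hw1 ▸ hwmono.monotone (Fin.le_last i)⟩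
  have hvmem : ∀ i, v i ∈ Icc (0:ℝ) 1 := by
    intro i
    exact ⟨hv0 ▸ hvmono.monotone (Fin.zero_le i), hv1 ▸ hvmono.monotone (Fin.le_last i)⟩
  have hwle : ∀ h : Fin H, w h.castSucc ≤ w h.succ :=
    fun h => (hwmono (Fin.castSucc_lt_succ (i := h))).le
  have hvle : ∀ m : Fin M, v m.castSucc ≤ v m.succ :=
    fun m => (hvmono (Fin.castSucc_lt_succ (i := m))).le
  set μ : Fin H → Fin M → ℝ := fun h m =>
    sInf (f '' (Icc (w h.castSucc) (w h.succ) ×ˢ Icc (v m.castSucc) (v m.succ))) with hμdef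
  set L : Fin M → ℝ := fun m => v m.succ - v m.castSucc with hLdef
  have hLpos : ∀ m, 0 < L m := fun m => sub_pos.2 (hvmono (Fin.castSucc_lt_succ (i := m)))
  set δ : ℝ := ((2:ℝ)^n)⁻¹ with hδdef
  have hδpos : 0 < δ := by positivity
  have htwo : (2:ℝ)^n * δ = 1 := by rw [hδdef]; field_simp
  have hμKδ : ∀ h m, 0 < μ h m - (K:ℝ) * δ := fun h m => sub_pos.2 (hsmall h m)
  set aPt : Fin (2^n) → ℝ := fun i => ((i:ℕ):ℝ)/2^n with haPtdef
  set bPt : Fin (2^n) → ℝ := fun i => (((i:ℕ):ℝ)+1)/2^n with hbPtdef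
  have hb_eq : ∀ i, bPt i = aPt i + δ := fun i => dyadicPt_succ n i
  have haPt0 : ∀ i, 0 ≤ aPt i := dyadicPt_nonneg n
  have hbPt1 : ∀ i, bPt i ≤ 1 := dyadicPt_succ_le_one n
  have habPt : ∀ i, aPt i ≤ bPt i := dyadicPt_le n
  set kk : Fin H → Fin (2^n) → ℝ := fun h i =>
    clampR (w h.castSucc) (w h.succ) (bPt i) - clampR (w h.castSucc) (w h.succ) (aPt i)
    with hkkdef
  set ll : Fin M → Fin (2^n) → ℝ := fun m j =>
    clampR (v m.castSucc) (v m.succ) (bPt j) - clampR (v m.castSucc) (v m.succ) (aPt j)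
    with hlldef
  have hkk0 : ∀ h i, 0 ≤ kk h i := fun h i =>
    sub_nonneg.2 (clampR_mono _ _ (habPt i))
  have hll0 : ∀ m j, 0 ≤ ll m j := fun m j =>
    sub_nonneg.2 (clampR_mono _ _ (habPt j))
  -- telescoping sums
  have hsum_kk : ∀ i, ∑ h : Fin H, kk h i = δ := by
    intro i
    have hsymm : ∀ h : Fin H, kk h i =
        clampR (aPt i) (bPt i) (w h.succ) - clampR (aPt i) (bPt i) (w h.castSucc) :=
      fun h => seg_symm (hwle h) (habPt i)
    rw [Finset.sum_congr rfl (fun h _ => hsymm h),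
      sum_fin_sub (fun t : Fin (H+1) => clampR (aPt i) (bPt i) (w t)), hw1, hw0,
      clampR_of_ge (habPt i) (hbPt1 i), clampR_of_le (haPt0 i), hb_eq i]
    ring
  have hsum_ll_j : ∀ j, ∑ m : Fin M, ll m j = δ := by
    intro j
    have hsymm : ∀ m : Fin M, ll m j =
        clampR (aPt j) (bPt j) (v m.succ) - clampR (aPt j) (bPt j) (v m.castSucc) :=
      fun m => seg_symm (hvle m) (habPt j)
    rw [Finset.sum_congr rfl (fun m _ => hsymm m),
      sum_fin_sub (fun t : Fin (M+1) => clampR (aPt j) (bPt j) (v t)), hv1, hv0,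
      clampR_of_ge (habPt j) (hbPt1 j), clampR_of_le (haPt0 j), hb_eq j]
    ring
  have hsum_ll : ∀ m, ∑ j : Fin (2^n), ll m j = L m := by
    intro m
    have := sum_dyadic_tele n (clampR (v m.castSucc) (v m.succ))
    rw [hlldef]
    simp only [hbPtdef, haPtdef]
    rw [this, clampR_of_ge (hvle m) (hvmem m.succ).2, clampR_of_le (hvmem m.castSucc).1]
  -- the candidate matrix
  set p' : Fin (2^n) → Fin (2^n) → ℝ := fun i j =>
    ∑ h : Fin H, ∑ m : Fin M, p h m * ((2^n : ℝ) * kk h i) * (ll m j / L m) with hp'def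
  have hp'0 : ∀ i j, 0 ≤ p' i j := by
    intro i j
    apply Finset.sum_nonneg; intro h _
    apply Finset.sum_nonneg; intro m _
    exact mul_nonneg (mul_nonneg (hp01 h m).1 (mul_nonneg (by positivity) (hkk0 h i)))
      (div_nonneg (hll0 m j) (hLpos m).le)
  have hp'row : ∀ i, ∑ j, p' i j = 1 := by
    intro i
    rw [Finset.sum_comm]
    have h1 : ∀ h : Fin H, ∑ j : Fin (2^n), ∑ m : Fin M,
        p h m * ((2^n : ℝ) * kk h i) * (ll m j / L m) = (2^n : ℝ) * kk h i := by
      intro h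
      rw [Finset.sum_comm]
      have h2 : ∀ m : Fin M, ∑ j : Fin (2^n),
          p h m * ((2^n : ℝ) * kk h i) * (ll m j / L m)
          = p h m * ((2^n : ℝ) * kk h i) := by
        intro m
        rw [← Finset.mul_sum]
        have : ∑ j : Fin (2^n), ll m j / L m = 1 := by
          rw [← Finset.sum_div, hsum_ll m, div_self (hLpos m).ne']
        rw [this, mul_one]
      rw [Finset.sum_congr rfl (fun m _ => h2 m), ← Finset.sum_mul, hprow h, one_mul]
    rw [Finset.sum_congr rfl (fun h _ => h1 h), ← Finset.mul_sum, hsum_kk i, htwo]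
  refine ⟨p', ⟨fun i j => ⟨hp'0 i j, ?_⟩, hp'row⟩, ?_⟩
  · calc p' i j ≤ ∑ j', p' i j' :=
        Finset.single_le_sum (fun j' _ => hp'0 i j') (Finset.mem_univ j)
    _ = 1 := hp'row i
  -- the load bound
  intro j
  have hμstar_pos : ∀ i : Fin (2^n), 0 < muStarDyadic f n i j := by
    intro i
    apply sqInf_pos hfCont hfpos (dyadicPt_le n i) (dyadicPt_le n j)
    apply Set.prod_mono <;> apply Set.Icc_subset_Icc
    exacts [dyadicPt_nonneg n i, dyadicPt_succ_le_one n i,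
      dyadicPt_nonneg n j, dyadicPt_succ_le_one n j]
  have hlamD0 : ∀ i : Fin (2^n), 0 ≤ lamDyadic lam n i := by
    intro i
    apply intervalIntegral.integral_nonneg (dyadicPt_le n i)
    intro x hx
    exact hlam x ⟨le_trans (dyadicPt_nonneg n i) hx.1, le_trans hx.2 (dyadicPt_succ_le_one n i)⟩
  have hμstar_ge : ∀ (i : Fin (2^n)) (h : Fin H) (m : Fin M),
      0 < kk h i → 0 < ll m j → μ h m - (K:ℝ) * δ ≤ muStarDyadic f n i j := by
    intro i h m hk hl
    obtain ⟨hk1, hk2⟩ := clampR_pos_inter (habPt i) hk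
    obtain ⟨hl1, hl2⟩ := clampR_pos_inter (habPt j) hl
    have hT : Icc (aPt i) (bPt i) ×ˢ Icc (aPt j) (bPt j) ⊆ Icc (0:ℝ) 1 ×ˢ Icc (0:ℝ) 1 := by
      apply Set.prod_mono <;> apply Set.Icc_subset_Icc
      exacts [haPt0 i, hbPt1 i, haPt0 j, hbPt1 j]
    have hsub : Icc (w h.castSucc) (w h.succ) ×ˢ Icc (v m.castSucc) (v m.succ)
        ⊆ Icc (0:ℝ) 1 ×ˢ Icc (0:ℝ) 1 := by
      apply Set.prod_mono <;> apply Set.Icc_subset_Icc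
      exacts [(hwmem _).1, (hwmem _).2, (hvmem _).1, (hvmem _).2]
    have := sqInf_lower hfLip (hwle h) (hvle m) hsub (habPt i) (habPt j) hδpos.le hT
      (by have := hb_eq i; linarith)
      (by have := hb_eq i; linarith)
      (by have := hb_eq j; linarith)
      (by have := hb_eq j; linarith)
    exact this
  -- rewrite the load as a triple sum
  set u : Fin (2^n) → Fin H → Fin M → ℝ := fun i h m =>
    (2 ^ n : ℝ) * lamDyadic lam n i * (p h m * ((2^n : ℝ) * kk h i) * (ll m j / L m))
      / muStarDyadic f n i j with hudef
  have hLHS : (∑ i : Fin (2^n), (2 ^ n : ℝ) * lamDyadic lam n i * p' i j / muStarDyadic f n i j)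
      = ∑ h : Fin H, ∑ m : Fin M, ∑ i : Fin (2^n), u i h m := by
    have h1 : ∀ i : Fin (2^n), (2 ^ n : ℝ) * lamDyadic lam n i * p' i j / muStarDyadic f n i j
        = ∑ h : Fin H, ∑ m : Fin M, u i h m := by
      intro i
      rw [hp'def]
      simp only []
      rw [Finset.mul_sum, Finset.sum_div]
      apply Finset.sum_congr rfl
      intro h _
      rw [Finset.mul_sum, Finset.sum_div]
    rw [Finset.sum_congr rfl (fun i _ => h1 i), Finset.sum_comm]
    apply Finset.sum_congr rfl
    intro h _
    rw [Finset.sum_comm]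
  rw [hLHS]
  -- bound each term
  set u' : Fin (2^n) → Fin H → Fin M → ℝ := fun i h m =>
    (p h m * ll m j * (2^n : ℝ) / (L m * (μ h m - (K:ℝ) * δ)))
      * ((2 ^ n : ℝ) * kk h i * lamDyadic lam n i) with hu'def
  have hu_le : ∀ i h m, u i h m ≤ u' i h m := by
    intro i h m
    rcases lt_or_ge 0 (kk h i) with hk | hk
    · rcases lt_or_ge 0 (ll m j) with hl | hl
      · have hge := hμstar_ge i h m hk hl
        have hpos := hμKδ h m
        set N : ℝ := (2 ^ n : ℝ) * lamDyadic lam n i * (p h m * ((2^n : ℝ) * kk h i)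
          * (ll m j / L m)) with hNdef
        have hN0 : 0 ≤ N :=
          mul_nonneg (mul_nonneg (by positivity) (hlamD0 i))
            (mul_nonneg (mul_nonneg (hp01 h m).1 (mul_nonneg (by positivity) hk.le))
              (div_nonneg hl.le (hLpos m).le))
        have hequ : u i h m = N / muStarDyadic f n i j := rfl
        have hequ' : u' i h m = N / (μ h m - (K:ℝ) * δ) := by
          rw [hu'def, hNdef]
          field_simp
        rw [hequ, hequ']
        exact div_le_div_of_nonneg_left hN0 hpos hge
      · have hll_eq : ll m j = 0 := le_antisymm hl (hll0 m j)
        have h1 : u i h m = 0 := by rw [hudef]; simp [hll_eq]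
        have h2 : u' i h m = 0 := by rw [hu'def]; simp [hll_eq]
        rw [h1, h2]
    · have hkk_eq : kk h i = 0 := le_antisymm hk (hkk0 h i)
      have h1 : u i h m = 0 := by rw [hudef]; simp [hkk_eq]
      have h2 : u' i h m = 0 := by rw [hu'def]; simp [hkk_eq]
      rw [h1, h2]
  have step1 : ∑ h : Fin H, ∑ m : Fin M, ∑ i : Fin (2^n), u i h m
      ≤ ∑ h : Fin H, ∑ m : Fin M, ∑ i : Fin (2^n), u' i h m := by
    apply Finset.sum_le_sum; intro h _
    apply Finset.sum_le_sum; intro m _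
    apply Finset.sum_le_sum; intro i _
    exact hu_le i h m
  -- group the u' sums using the integral bound
  set Intg : Fin H → ℝ := fun h =>
    ∫ x in Ioc (max (w h.castSucc - δ) 0) (min (w h.succ + δ) 1), lam x with hIntgdef
  have hgroup : ∀ h : Fin H, ∑ i : Fin (2^n), (2 ^ n : ℝ) * kk h i * lamDyadic lam n i
      ≤ Intg h := by
    intro h
    exact lam_group_bound lam hlam hint n (hwmem h.castSucc).1 (hwle h) (hwmem h.succ).2
  have step2a : ∀ (h : Fin H) (m : Fin M), ∑ i : Fin (2^n), u' i h m
      ≤ ((2^n : ℝ) * ll m j) * (p h m * Intg h / (L m * (μ h m - (K:ℝ) * δ))) := by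
    intro h m
    have hcoef0 : 0 ≤ p h m * ll m j * (2^n : ℝ) / (L m * (μ h m - (K:ℝ) * δ)) :=
      div_nonneg (mul_nonneg (mul_nonneg (hp01 h m).1 (hll0 m j)) (by positivity))
        (mul_nonneg (hLpos m).le (hμKδ h m).le)
    calc ∑ i : Fin (2^n), u' i h m
        = (p h m * ll m j * (2^n : ℝ) / (L m * (μ h m - (K:ℝ) * δ)))
          * ∑ i : Fin (2^n), (2 ^ n : ℝ) * kk h i * lamDyadic lam n i := by
          rw [Finset.mul_sum]
    _ ≤ (p h m * ll m j * (2^n : ℝ) / (L m * (μ h m - (K:ℝ) * δ))) * Intg h :=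
          mul_le_mul_of_nonneg_left (hgroup h) hcoef0
    _ = ((2^n : ℝ) * ll m j) * (p h m * Intg h / (L m * (μ h m - (K:ℝ) * δ))) := by
          field_simp
  have step2 : ∑ h : Fin H, ∑ m : Fin M, ∑ i : Fin (2^n), u' i h m
      ≤ ∑ m : Fin M, ((2^n : ℝ) * ll m j)
          * ∑ h : Fin H, p h m * Intg h / (L m * (μ h m - (K:ℝ) * δ)) := by
    rw [Finset.sum_comm]
    apply Finset.sum_le_sum
    intro m _
    rw [Finset.mul_sum]
    apply Finset.sum_le_sum
    intro h _
    exact step2a h m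
  -- conclude with the convex-combination argument
  have hwgt0 : ∀ m : Fin M, 0 ≤ (2^n : ℝ) * ll m j :=
    fun m => mul_nonneg (by positivity) (hll0 m j)
  have hwgt1 : ∑ m : Fin M, (2^n : ℝ) * ll m j = 1 := by
    rw [← Finset.mul_sum, hsum_ll_j j, htwo]
  obtain ⟨m0, hm0⟩ : ∃ m0 : Fin M, 0 < (2^n : ℝ) * ll m0 j := by
    by_contra hc
    push_neg at hc
    have : ∑ m : Fin M, (2^n : ℝ) * ll m j = 0 :=
      Finset.sum_eq_zero fun m _ => le_antisymm (hc m) (hwgt0 m)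
    rw [hwgt1] at this
    norm_num at this
  have hfinal : ∑ m : Fin M, ((2^n : ℝ) * ll m j)
      * ∑ h : Fin H, p h m * Intg h / (L m * (μ h m - (K:ℝ) * δ)) < rstar := by
    have hBm : ∀ m : Fin M,
        (∑ h : Fin H, p h m * Intg h / (L m * (μ h m - (K:ℝ) * δ))) < rstar :=
      fun m => hBnd m
    calc ∑ m : Fin M, ((2^n : ℝ) * ll m j)
          * ∑ h : Fin H, p h m * Intg h / (L m * (μ h m - (K:ℝ) * δ))
        < ∑ m : Fin M, ((2^n : ℝ) * ll m j) * rstar := by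
          apply Finset.sum_lt_sum
          · intro m _
            exact mul_le_mul_of_nonneg_left (hBm m).le (hwgt0 m)
          · exact ⟨m0, Finset.mem_univ m0, mul_lt_mul_of_pos_left (hBm m0) hm0⟩
    _ = rstar := by rw [← Finset.sum_mul, hwgt1, one_mul]
  exact lt_of_le_of_lt (le_trans step1 step2) hfinal

/-- Lemma C.2: if a Lipschitz, positive `f` admits some
`(w,v,p)`-subcritical partition with maximal load below `ρ*`, then some dyadic
level `n` admits a `2ⁿ×2ⁿ` stochastic matrix `p'` whose load is below `ρ*` for
every server block; equivalently `ρⁿ < ρ*`. -/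
theorem stmt13 (f : ℝ × ℝ → ℝ)
    (hfLip : ∃ K : NNReal, LipschitzOnWith K f (Icc (0:ℝ) 1 ×ˢ Icc (0:ℝ) 1))
    (hfpos : ∀ z ∈ Icc (0:ℝ) 1 ×ˢ Icc (0:ℝ) 1, 0 < f z)
    (lam : ℝ → ℝ) (hlam : ∀ x ∈ Icc (0:ℝ) 1, 0 ≤ lam x)
    (hint : IntegrableOn lam (Icc 0 1))
    (H M : ℕ) (hH : 0 < H) (hM : 0 < M)
    (w : Fin (H + 1) → ℝ) (hw0 : w 0 = 0) (hw1 : w (Fin.last H) = 1)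
    (hwmono : StrictMono w)
    (v : Fin (M + 1) → ℝ) (hv0 : v 0 = 0) (hv1 : v (Fin.last M) = 1)
    (hvmono : StrictMono v)
    (p : Fin H → Fin M → ℝ) (hp : IsStochastic p)
    (rstar : ℝ)
    (hload : (⨆ m : Fin M, ∑ h : Fin H,
        p h m * (∫ x in (w h.castSucc)..(w h.succ), lam x) /
          ((v m.succ - v m.castSucc) *
            sInf (f '' (Icc (w h.castSucc) (w h.succ) ×ˢ
                        Icc (v m.castSucc) (v m.succ))))) < rstar) :
    ∃ n : ℕ,
      (∃ p' : Fin (2 ^ n) → Fin (2 ^ n) → ℝ, IsStochastic p' ∧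
        ∀ m : Fin (2 ^ n), ∑ h : Fin (2 ^ n),
          (2 ^ n : ℝ) * lamDyadic lam n h * p' h m / muStarDyadic f n h m < rstar) ∧
      rhoStar f lam n < rstar := by
  classical
  obtain ⟨K, hfLip⟩ := hfLip
  have hfCont : ContinuousOn f (Icc (0:ℝ) 1 ×ˢ Icc (0:ℝ) 1) := hfLip.continuousOn
  have hwmem : ∀ i, w i ∈ Icc (0:ℝ) 1 := by
    intro i
    exact ⟨hw0 ▸ hwmono.monotone (Fin.zero_le i), hw1 ▸ hwmono.monotone (Fin.le_last i)⟩
  have hvmem : ∀ i, v i ∈ Icc (0:ℝ) 1 := by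
    intro i
    exact ⟨hv0 ▸ hvmono.monotone (Fin.zero_le i), hv1 ▸ hvmono.monotone (Fin.le_last i)⟩
  have hwle : ∀ h : Fin H, w h.castSucc ≤ w h.succ :=
    fun h => (hwmono (Fin.castSucc_lt_succ (i := h))).le
  have hvle : ∀ m : Fin M, v m.castSucc ≤ v m.succ :=
    fun m => (hvmono (Fin.castSucc_lt_succ (i := m))).le
  set μ : Fin H → Fin M → ℝ := fun h m =>
    sInf (f '' (Icc (w h.castSucc) (w h.succ) ×ˢ Icc (v m.castSucc) (v m.succ))) with hμdef
  set L : Fin M → ℝ := fun m => v m.succ - v m.castSucc with hLdef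
  have hLpos : ∀ m, 0 < L m := fun m => sub_pos.2 (hvmono (Fin.castSucc_lt_succ (i := m)))
  have hμpos : ∀ h m, 0 < μ h m := by
    intro h m
    apply sqInf_pos hfCont hfpos (hwle h) (hvle m)
    apply Set.prod_mono <;> apply Set.Icc_subset_Icc
    exacts [(hwmem _).1, (hwmem _).2, (hvmem _).1, (hvmem _).2]
  -- the primitive of lam
  set F : ℝ → ℝ := fun x => ∫ t in (0:ℝ)..x, lam t with hFdef
  have hIccuIcc : Set.uIcc (0:ℝ) 1 = Set.Icc 0 1 := Set.uIcc_of_le zero_le_one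
  have hFc : ContinuousOn F (Set.Icc 0 1) := by
    have := intervalIntegral.continuousOn_primitive_interval
      (a := 0) (b := 1) (f := lam) (μ := volume) (by rwa [hIccuIcc])
    rwa [hIccuIcc] at this
  have hII : ∀ {a b : ℝ}, a ∈ Icc (0:ℝ) 1 → b ∈ Icc (0:ℝ) 1 →
      IntervalIntegrable lam volume a b := by
    intro a b ha hb
    exact (hint.mono_set (Set.uIcc_subset_Icc ha hb)).intervalIntegrable
  have hFsub : ∀ {a b : ℝ}, a ∈ Icc (0:ℝ) 1 → b ∈ Icc (0:ℝ) 1 →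
      F b - F a = ∫ x in a..b, lam x := by
    intro a b ha hb
    exact intervalIntegral.integral_interval_sub_left
      (hII (Set.left_mem_Icc.2 zero_le_one) hb) (hII (Set.left_mem_Icc.2 zero_le_one) ha)
  -- the dyadic mesh sizes
  set δ : ℕ → ℝ := fun n => ((2:ℝ) ^ n)⁻¹ with hδdef
  have hδpos : ∀ n, 0 < δ n := fun n => by positivity
  have hδ0 : Filter.Tendsto δ Filter.atTop (nhds 0) := by
    have heq : δ = fun n => ((2:ℝ)⁻¹) ^ n := by
      funext n; rw [hδdef]; simp [inv_pow]
    rw [heq]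
    exact tendsto_pow_atTop_nhds_zero_of_lt_one (by norm_num) (by norm_num)
  set a' : Fin H → ℕ → ℝ := fun h n => max (w h.castSucc - δ n) 0 with ha'def
  set b' : Fin H → ℕ → ℝ := fun h n => min (w h.succ + δ n) 1 with hb'def
  have ha'mem : ∀ h n, a' h n ∈ Icc (0:ℝ) 1 := by
    intro h n
    constructor
    · exact le_max_right _ _
    · apply max_le
      · have := (hwmem h.castSucc).2
        have := hδpos n
        linarith
      · norm_num
  have hb'mem : ∀ h n, b' h n ∈ Icc (0:ℝ) 1 := by
    intro h n
    constructor
    · apply le_min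
      · have := (hwmem h.succ).1
        have := hδpos n
        linarith
      · norm_num
    · exact min_le_right _ _
  have ha'b' : ∀ h n, a' h n ≤ b' h n := by
    intro h n
    apply max_le
    · apply le_min
      · have := hwle h; have := hδpos n; linarith
      · have := (hwmem h.castSucc).2; have := hδpos n; linarith
    · apply le_min
      · have := (hwmem h.succ).1; have := hδpos n; linarith
      · norm_num
  -- limits of integrals over the slightly enlarged intervals
  have ha'tend : ∀ h : Fin H, Filter.Tendsto (fun n => a' h n)
      Filter.atTop (nhds (w h.castSucc)) := by
    intro h
    have h1 : Filter.Tendsto (fun n => w h.castSucc - δ n)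
        Filter.atTop (nhds (w h.castSucc - 0)) := tendsto_const_nhds.sub hδ0
    rw [sub_zero] at h1
    have h2 := h1.max (tendsto_const_nhds (x := (0:ℝ)))
    rwa [max_eq_left (hwmem h.castSucc).1] at h2
  have hb'tend : ∀ h : Fin H, Filter.Tendsto (fun n => b' h n)
      Filter.atTop (nhds (w h.succ)) := by
    intro h
    have h1 : Filter.Tendsto (fun n => w h.succ + δ n)
        Filter.atTop (nhds (w h.succ + 0)) := tendsto_const_nhds.add hδ0
    rw [add_zero] at h1
    have h2 := h1.min (tendsto_const_nhds (x := (1:ℝ)))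
    rwa [min_eq_left (hwmem h.succ).2] at h2
  have hFa' : ∀ h : Fin H, Filter.Tendsto (fun n => F (a' h n))
      Filter.atTop (nhds (F (w h.castSucc))) := by
    intro h
    apply ((hFc (w h.castSucc) (hwmem h.castSucc)).tendsto).comp
    apply tendsto_nhdsWithin_of_tendsto_nhds_of_eventually_within _ (ha'tend h)
    exact Filter.Eventually.of_forall (fun n => ha'mem h n)
  have hFb' : ∀ h : Fin H, Filter.Tendsto (fun n => F (b' h n))
      Filter.atTop (nhds (F (w h.succ))) := by
    intro h
    apply ((hFc (w h.succ) (hwmem h.succ)).tendsto).comp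
    apply tendsto_nhdsWithin_of_tendsto_nhds_of_eventually_within _ (hb'tend h)
    exact Filter.Eventually.of_forall (fun n => hb'mem h n)
  -- the upper-bound functions and their limits
  set Bnd : Fin M → ℕ → ℝ := fun m n => ∑ h : Fin H,
    p h m * (F (b' h n) - F (a' h n)) / (L m * (μ h m - (K:ℝ) * δ n)) with hBnddef
  set A : Fin M → ℝ := fun m => ∑ h : Fin H,
    p h m * (F (w h.succ) - F (w h.castSucc)) / (L m * μ h m) with hAdef
  have hAlt : ∀ m, A m < rstar := by
    intro m
    refine lt_of_le_of_lt ?_ hload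
    have hAeq : A m = (fun m : Fin M => ∑ h : Fin H,
        p h m * (∫ x in (w h.castSucc)..(w h.succ), lam x) /
          ((v m.succ - v m.castSucc) *
            sInf (f '' (Icc (w h.castSucc) (w h.succ) ×ˢ
                        Icc (v m.castSucc) (v m.succ))))) m := by
      rw [hAdef]
      simp only [hLdef, hμdef]
      apply Finset.sum_congr rfl
      intro h _
      rw [hFsub (hwmem h.castSucc) (hwmem h.succ)]
    rw [hAeq]
    exact le_ciSup (f := fun m : Fin M => ∑ h : Fin H,
        p h m * (∫ x in (w h.castSucc)..(w h.succ), lam x) /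
          ((v m.succ - v m.castSucc) *
            sInf (f '' (Icc (w h.castSucc) (w h.succ) ×ˢ
                        Icc (v m.castSucc) (v m.succ)))))
      (Set.Finite.bddAbove (Set.finite_range _)) m
  have hBndTend : ∀ m, Filter.Tendsto (Bnd m) Filter.atTop (nhds (A m)) := by
    intro m
    rw [hBnddef, hAdef]
    apply tendsto_finset_sum
    intro h _
    apply Filter.Tendsto.div
    · exact tendsto_const_nhds.mul ((hFb' h).sub (hFa' h))
    · have h1 : Filter.Tendsto (fun n => μ h m - (K:ℝ) * δ n)
          Filter.atTop (nhds (μ h m - (K:ℝ) * 0)) :=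
        tendsto_const_nhds.sub (tendsto_const_nhds.mul hδ0)
      rw [mul_zero, sub_zero] at h1
      exact tendsto_const_nhds.mul h1
    · exact (mul_pos (hLpos m) (hμpos h m)).ne'
  have hEv1 : ∀ᶠ n in Filter.atTop, ∀ m : Fin M, Bnd m n < rstar :=
    Filter.eventually_all.2 fun m => (hBndTend m).eventually_lt_const (hAlt m)
  have hEv2 : ∀ᶠ n in Filter.atTop, ∀ (h : Fin H) (m : Fin M), (K:ℝ) * δ n < μ h m := by
    apply Filter.eventually_all.2
    intro h
    apply Filter.eventually_all.2
    intro m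
    have h1 : Filter.Tendsto (fun n => (K:ℝ) * δ n) Filter.atTop (nhds ((K:ℝ) * 0)) :=
      tendsto_const_nhds.mul hδ0
    rw [mul_zero] at h1
    exact h1.eventually_lt_const (hμpos h m)
  obtain ⟨n, hn1, hn2⟩ := (hEv1.and hEv2).exists
  -- the construction at level n
  obtain ⟨p', hp'stoch, hp'load⟩ :=
    dyadic_construction f K hfLip hfpos lam hlam hint w hw0 hw1 hwmono v hv0 hv1 hvmono
      p hp rstar n
      (by
        intro h m
        have := hn2 h m
        simpa [hμdef, hδdef] using this)
      (by
        intro m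
        have hB := hn1 m
        rw [hBnddef] at hB
        refine lt_of_le_of_lt (le_of_eq ?_) hB
        apply Finset.sum_congr rfl
        intro h _
        have hIoc : (∫ x in Ioc (max (w h.castSucc - ((2:ℝ)^n)⁻¹) 0)
            (min (w h.succ + ((2:ℝ)^n)⁻¹) 1), lam x) = F (b' h n) - F (a' h n) := by
          rw [hFsub (ha'mem h n) (hb'mem h n),
            intervalIntegral.integral_of_le (ha'b' h n)]
        rw [hIoc])
  refine ⟨n, ⟨p', hp'stoch, hp'load⟩, ?_⟩
  -- the rhoStar bound
  have h2npos : 0 < 2 ^ n := by positivity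
  have : Nonempty (Fin (2 ^ n)) := ⟨⟨0, h2npos⟩⟩
  have hlamD0 : ∀ i : Fin (2^n), 0 ≤ lamDyadic lam n i := by
    intro i
    apply intervalIntegral.integral_nonneg (dyadicPt_le n i)
    intro x hx
    exact hlam x ⟨le_trans (dyadicPt_nonneg n i) hx.1, le_trans hx.2 (dyadicPt_succ_le_one n i)⟩
  have hμstar_pos : ∀ i j : Fin (2^n), 0 < muStarDyadic f n i j := by
    intro i j
    apply sqInf_pos hfCont hfpos (dyadicPt_le n i) (dyadicPt_le n j)
    apply Set.prod_mono <;> apply Set.Icc_subset_Icc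
    exacts [dyadicPt_nonneg n i, dyadicPt_succ_le_one n i,
      dyadicPt_nonneg n j, dyadicPt_succ_le_one n j]
  have hbdd : BddBelow { r : ℝ | ∃ q : Fin (2 ^ n) → Fin (2 ^ n) → ℝ, IsStochastic q ∧
      r = ⨆ m : Fin (2 ^ n), ∑ h : Fin (2 ^ n),
        (2 ^ n : ℝ) * lamDyadic lam n h * q h m / muStarDyadic f n h m } := by
    refine ⟨0, ?_⟩
    rintro r ⟨q, hq, rfl⟩
    have hterm : ∀ m : Fin (2^n), 0 ≤ ∑ h : Fin (2 ^ n),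
        (2 ^ n : ℝ) * lamDyadic lam n h * q h m / muStarDyadic f n h m := by
      intro m
      apply Finset.sum_nonneg
      intro h _
      exact div_nonneg (mul_nonneg (mul_nonneg (by positivity) (hlamD0 h)) (hq.1 h m).1)
        (hμstar_pos h m).le
    exact le_trans (hterm (Classical.arbitrary _))
      (le_ciSup (f := fun m : Fin (2^n) => ∑ h : Fin (2 ^ n),
        (2 ^ n : ℝ) * lamDyadic lam n h * q h m / muStarDyadic f n h m)
        (Set.Finite.bddAbove (Set.finite_range _)) _)
  have hmem : (⨆ m : Fin (2 ^ n), ∑ h : Fin (2 ^ n),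
      (2 ^ n : ℝ) * lamDyadic lam n h * p' h m / muStarDyadic f n h m) ∈
      { r : ℝ | ∃ q : Fin (2 ^ n) → Fin (2 ^ n) → ℝ, IsStochastic q ∧
        r = ⨆ m : Fin (2 ^ n), ∑ h : Fin (2 ^ n),
          (2 ^ n : ℝ) * lamDyadic lam n h * q h m / muStarDyadic f n h m } :=
    ⟨p', hp'stoch, rfl⟩
  have hsup_lt : (⨆ m : Fin (2 ^ n), ∑ h : Fin (2 ^ n),
      (2 ^ n : ℝ) * lamDyadic lam n h * p' h m / muStarDyadic f n h m) < rstar := by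
    obtain ⟨m0, _, hm0⟩ := Finset.exists_max_image Finset.univ
      (fun m : Fin (2^n) => ∑ h : Fin (2 ^ n),
        (2 ^ n : ℝ) * lamDyadic lam n h * p' h m / muStarDyadic f n h m)
      ⟨Classical.arbitrary _, Finset.mem_univ _⟩
    refine lt_of_le_of_lt (ciSup_le fun m => hm0 m (Finset.mem_univ m)) (hp'load m0)
  exact lt_of_le_of_lt (csInf_le hbdd hmem) hsup_lt
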